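/- Let 𝓘 ⊆ [p] be a set of intervention targets and let 𝒟 and 𝒟' be DAGs on [p] that are 𝓘-equivalent. Then for every model (B, {Ω^e}_{e∈ℰ}) over a finite collection of environments ℰ with B compatible with 𝒟 and whose intervention target set { j : ∃ e, f ∈ ℰ, Ω^e_{jj} ≠ Ω^f_{jj} } equals 𝓘, there exists a model (B~, {Ω~^e}_{e∈ℰ}) such that B~ is compatible with 𝒟', the intervention target set { j : ∃ e, f ∈ ℰ, Ω~^e_{jj} ≠ Ω~^f_{jj} } equals 𝓘, and (I−B)⁻¹ Ω^e (I−B)⁻ᵀ = (I−B~)⁻¹ Ω~^e (I−B~)⁻ᵀ for every e ∈ ℰ. -/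

import Mathlib

open Matrix

/-- A matrix is a DAG (connectivity) matrix if it is strictly lower triangular up to a
simultaneous permutation of rows and columns (in particular it has zero diagonal). -/
def IsDagMatrix {p : ℕ} (B : Matrix (Fin p) (Fin p) ℝ) : Prop :=
  ∃ σ : Equiv.Perm (Fin p), ∀ i j : Fin p, σ i ≤ σ j → B i j = 0

/-- A noise-variance matrix: diagonal with positive diagonal entries. -/
def DiagPos {p : ℕ} (Ω : Matrix (Fin p) (Fin p) ℝ) : Prop :=
  Ω.IsDiag ∧ ∀ i, 0 < Ω i i

/-- The covariance matrix `(I − B)⁻¹ Ω (I − B)⁻ᵀ` entailed by the model `(B, Ω)`. -/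
noncomputable def CovOf {p : ℕ} (B Ω : Matrix (Fin p) (Fin p) ℝ) : Matrix (Fin p) (Fin p) ℝ :=
  (1 - B)⁻¹ * Ω * ((1 - B)⁻¹)ᵀ

/-- A directed graph on `[p]` (given as its edge relation, `D a b` meaning `a → b`)
is acyclic if it has no directed cycles. -/
def IsAcyclic {p : ℕ} (D : Fin p → Fin p → Prop) : Prop :=
  ∀ i, ¬ Relation.TransGen D i i

/-- The graph `G(B)` underlying a connectivity matrix `B`: an edge `j → i` whenever
`B i j ≠ 0`. -/
def graphOf {p : ℕ} (B : Matrix (Fin p) (Fin p) ℝ) : Fin p → Fin p → Prop :=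
  fun j i => B i j ≠ 0

/-- A matrix `B` is compatible with a graph `D` (written `B ∼ D`) if `B i j ≠ 0`
implies that `j → i` is an edge of `D`. -/
def Compatible {p : ℕ} (B : Matrix (Fin p) (Fin p) ℝ) (D : Fin p → Fin p → Prop) : Prop :=
  ∀ i j, B i j ≠ 0 → D j i

/-- Two directed graphs have the same skeleton: the same adjacencies ignoring direction. -/
def SameSkeleton {V : Type*} (D D' : V → V → Prop) : Prop :=
  ∀ a b, (D a b ∨ D b a) ↔ (D' a b ∨ D' b a)

/-- `(i, k, j)` is a v-structure: edges `i → k` and `j → k` with `i ≠ j` and `i, j`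
non-adjacent. -/
def IsVStruct {V : Type*} (D : V → V → Prop) (i k j : V) : Prop :=
  D i k ∧ D j k ∧ i ≠ j ∧ ¬ D i j ∧ ¬ D j i

/-- Two directed graphs have the same v-structures. -/
def SameVStructs {V : Type*} (D D' : V → V → Prop) : Prop :=
  ∀ i k j, IsVStruct D i k j ↔ IsVStruct D' i k j

/-- `𝓘`-equivalence of two DAGs: same skeleton, same v-structures, and the same parents
for every node in `𝓘`. -/
def IEquiv {p : ℕ} (I : Set (Fin p)) (D D' : Fin p → Fin p → Prop) : Prop :=
  SameSkeleton D D' ∧ SameVStructs D D' ∧ ∀ i ∈ I, ∀ j, D j i ↔ D' j i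

section Acyclic

variable {p : ℕ} {D : Fin p → Fin p → Prop}

lemma IsAcyclic.no1 (h : IsAcyclic D) {a : Fin p} : ¬ D a a :=
  fun hd => h a (Relation.TransGen.single hd)

lemma IsAcyclic.no2 (h : IsAcyclic D) {a b : Fin p} (h1 : D a b) (h2 : D b a) : False :=
  h a ((Relation.TransGen.single h1).tail h2)

lemma IsAcyclic.no3 (h : IsAcyclic D) {a b c : Fin p} (h1 : D a b) (h2 : D b c)
    (h3 : D c a) : False :=
  h a (((Relation.TransGen.single h1).tail h2).tail h3)

lemma exists_topo (h : IsAcyclic D) : ∃ σ : Equiv.Perm (Fin p), ∀ a b, D a b → σ a < σ b := by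
  classical
  rcases Nat.eq_zero_or_pos p with hp | hp
  · subst hp; exact ⟨1, fun a => a.elim0⟩
  set f : Fin p → ℕ := fun a => (Finset.univ.filter (fun c => Relation.TransGen D c a)).card
    with hf
  have hmono : ∀ a b, D a b → f a < f b := by
    intro a b hab
    apply Finset.card_lt_card
    rw [Finset.ssubset_def]
    constructor
    · intro c hc
      simp only [Finset.mem_filter, Finset.mem_univ, true_and] at hc ⊢
      exact hc.tail hab
    · intro hsub
      have ha : a ∈ Finset.univ.filter (fun c => Relation.TransGen D c b) := by
        simp [Relation.TransGen.single hab]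
      have := hsub ha
      simp only [Finset.mem_filter, Finset.mem_univ, true_and] at this
      exact h a this
  set key : Fin p → ℕ := fun a => p * f a + a.val with hkey
  have hkeymono : ∀ a b, D a b → key a < key b := by
    intro a b hab
    have h1 : f a + 1 ≤ f b := hmono a b hab
    have h2 : a.val < p := a.isLt
    have h3 : p * f a + p ≤ p * f b := by
      calc p * f a + p = p * (f a + 1) := by ring
      _ ≤ p * f b := Nat.mul_le_mul_left _ h1
    simp only [hkey]
    omega
  have hkeyinj : Function.Injective key := by
    intro a b hab
    have h1 : key a % p = a.val := by
      simp only [hkey, Nat.mul_add_mod]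
      exact Nat.mod_eq_of_lt a.isLt
    have h2 : key b % p = b.val := by
      simp only [hkey, Nat.mul_add_mod]
      exact Nat.mod_eq_of_lt b.isLt
    apply Fin.ext
    rw [← h1, ← h2, hab]
  let s : Finset ℕ := Finset.univ.image key
  have hcard : s.card = p := by
    rw [Finset.card_image_of_injective _ hkeyinj, Finset.card_univ, Fintype.card_fin]
  let e := s.orderIsoOfFin hcard
  let σ0 : Fin p → Fin p := fun a =>
    e.symm ⟨key a, Finset.mem_image_of_mem key (Finset.mem_univ a)⟩
  have hσ0 : ∀ a b, key a < key b → σ0 a < σ0 b := by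
    intro a b hab
    exact e.symm.lt_iff_lt.mpr (Subtype.mk_lt_mk.mpr hab)
  have hinj : Function.Injective σ0 := by
    intro a b hab
    have := e.symm.injective hab
    exact hkeyinj (congrArg Subtype.val this)
  refine ⟨Equiv.ofBijective σ0 (Finite.injective_iff_bijective.mp hinj), ?_⟩
  intro a b hab
  exact hσ0 a b (hkeymono a b hab)

lemma isDagMatrix_of_compatible {B : Matrix (Fin p) (Fin p) ℝ}
    (hD : IsAcyclic D) (h : Compatible B D) : IsDagMatrix B := by
  obtain ⟨σ, hσ⟩ := exists_topo hD
  refine ⟨σ, fun i j hle => ?_⟩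
  by_contra hB
  exact absurd hle (not_le.mpr (hσ j i (h i j hB)))

end Acyclic

section Chickering

variable {p : ℕ} {D D' : Fin p → Fin p → Prop}

/-- Chickering's lemma: two equivalent distinct DAGs admit a covered edge of the first
that is reversed in the second. -/
lemma chickering (hD : IsAcyclic D) (hD' : IsAcyclic D')
    (hsk : SameSkeleton D D') (hv : SameVStructs D D')
    (hne : ∃ a b, D a b ∧ ¬ D' a b) :
    ∃ v w, D v w ∧ D' w v ∧ (∀ u, D u w ↔ (D u v ∨ u = v)) := by
  classical
  obtain ⟨σ, hσ⟩ := exists_topo hD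
  -- the set of "reversed-edge" targets
  let T : Finset (Fin p) := Finset.univ.filter (fun y => ∃ x, D x y ∧ D' y x)
  have hTne : T.Nonempty := by
    obtain ⟨a, b, hab, hab'⟩ := hne
    have : D' a b ∨ D' b a := (hsk a b).mp (Or.inl hab)
    refine ⟨b, ?_⟩
    simp only [T, Finset.mem_filter, Finset.mem_univ, true_and]
    exact ⟨a, hab, this.resolve_left hab'⟩
  obtain ⟨y, hyT, hymin⟩ := T.exists_min_image (fun y => σ y) hTne
  simp only [T, Finset.mem_filter, Finset.mem_univ, true_and] at hyT
  -- candidates: reversed parents of y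
  let X : Finset (Fin p) := Finset.univ.filter (fun x => D x y ∧ D' y x)
  have hXne : X.Nonempty := by
    obtain ⟨x, hx⟩ := hyT
    exact ⟨x, by simp only [X, Finset.mem_filter, Finset.mem_univ, true_and]; exact hx⟩
  obtain ⟨x, hxX, hxmax⟩ := X.exists_max_image (fun x => σ x) hXne
  simp only [X, Finset.mem_filter, Finset.mem_univ, true_and] at hxX
  obtain ⟨hxy, hyx'⟩ := hxX
  refine ⟨x, y, hxy, hyx', fun u => ?_⟩
  have hymin' : ∀ z ∈ T, σ y ≤ σ z := fun z hz => hymin z hz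
  constructor
  · -- D u y → D u x ∨ u = x
    intro huy
    by_contra hcon
    push_neg at hcon
    obtain ⟨hux, hune⟩ := hcon
    have huy_ne : u ≠ y := fun h => hD.no1 (h ▸ huy)
    by_cases hadj : D u x ∨ D x u
    · -- case (b1): x → u in D
      have hxu : D x u := hadj.resolve_left hux
      have : D' u y ∨ D' y u := (hsk u y).mp (Or.inl huy)
      rcases this with huy' | hyu'
      · -- sub-case D' u y
        have hux' : ¬ D' x u := by
          intro hxu'
          exact hD'.no3 huy' hyx' hxu'
        have hxu' : D' u x := ((hsk u x).mp (Or.inr hxu)).resolve_right hux'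
        -- (x, u) is a reversed edge with target u
        have huT : u ∈ T := by
          simp only [T, Finset.mem_filter, Finset.mem_univ, true_and]
          exact ⟨x, hxu, hxu'⟩
        have h1 : σ y ≤ σ u := hymin' u huT
        exact absurd (hσ u y huy) (not_lt.mpr h1)
      · -- sub-case D' y u : u is a candidate for y, contradicting maximality of x
        have huX : u ∈ X := by
          simp only [X, Finset.mem_filter, Finset.mem_univ, true_and]
          exact ⟨huy, hyu'⟩
        have h1 : σ u ≤ σ x := hxmax u huX
        exact absurd (hσ x u hxu) (not_lt.mpr h1)
    · -- case (b2): u, x nonadjacent : v-structure u → y ← x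
      push_neg at hadj
      have hvs : IsVStruct D u y x := ⟨huy, hxy, hune, hadj.1, hadj.2⟩
      have hvs' : IsVStruct D' u y x := (hv u y x).mp hvs
      exact absurd hvs'.2.1 (fun h => hD'.no2 h hyx')
  · -- D u x ∨ u = x → D u y
    rintro (hux | rfl)
    · by_contra huy
      -- case (a)
      have hune_y : u ≠ y := by
        rintro rfl
        exact hD.no2 hux hxy
      have hnadj : ¬ D u y ∧ ¬ D y u := by
        refine ⟨huy, fun hyu => hD.no3 hyu hux hxy⟩
      have hux' : ¬ D' u x := by
        intro hux'
        -- v-structure u → x ← y in D' but not in D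
        have hnadj' : ¬ D' u y ∧ ¬ D' y u := by
          have := (hsk u y).not
          constructor
          · intro h1; exact hnadj.1 (((hsk u y).mpr (Or.inl h1)).resolve_right
              (fun h2 => hD.no3 h2 hux hxy) )
          · intro h1
            have := (hsk u y).mpr (Or.inr h1)
            rcases this with h2 | h2
            · exact hnadj.1 h2
            · exact hnadj.2 h2
        have hvs' : IsVStruct D' u x y := ⟨hux', hyx', hune_y, hnadj'.1, hnadj'.2⟩
        have hvs : IsVStruct D u x y := (hv u x y).mpr hvs'
        exact hD.no2 hvs.2.1 hxy
      have hxu' : D' x u := ((hsk u x).mp (Or.inl hux)).resolve_left hux'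
      have hxT : x ∈ T := by
        simp only [T, Finset.mem_filter, Finset.mem_univ, true_and]
        exact ⟨u, hux, hxu'⟩
      have h1 : σ y ≤ σ x := hymin' x hxT
      exact absurd (hσ x y hxy) (not_lt.mpr h1)
    · exact hxy

end Chickering

section Flip

variable {p : ℕ}

/-- The graph obtained from `D` by reversing the edge `v → w`. -/
def Dflip (v w : Fin p) (D : Fin p → Fin p → Prop) : Fin p → Fin p → Prop :=
  fun a b => (a = w ∧ b = v) ∨ (D a b ∧ ¬(a = v ∧ b = w))

variable {D : Fin p → Fin p → Prop} {v w : Fin p}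

/-- covered edge: parents of `w` are exactly parents of `v` together with `v`. -/
def Covered (D : Fin p → Fin p → Prop) (v w : Fin p) : Prop :=
  ∀ u, D u w ↔ (D u v ∨ u = v)

lemma flip_acyclic (hD : IsAcyclic D) (hvw : D v w) (hcov : Covered D v w) :
    IsAcyclic (Dflip v w D) := by
  have hne : v ≠ w := fun h => hD.no1 (h ▸ hvw)
  set D2 : Fin p → Fin p → Prop := fun a b => D a b ∧ ¬(a = v ∧ b = w) with hD2
  have hD2D : ∀ a b, D2 a b → D a b := fun a b h => h.1
  have hD2t : ∀ a b, Relation.TransGen D2 a b → Relation.TransGen D a b :=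
    fun a b h => Relation.TransGen.mono hD2D a b h
  -- no D2 path from v to w
  have hkey : ¬ Relation.TransGen D2 v w := by
    intro h
    rw [Relation.TransGen.tail'_iff] at h
    obtain ⟨y, hvy, hyw⟩ := h
    have hyne : y ≠ v := fun h => hyw.2 ⟨h, rfl⟩
    have hyv : D y v := ((hcov y).mp hyw.1).resolve_right hyne
    rcases Relation.reflTransGen_iff_eq_or_transGen.mp hvy with h1 | h1
    · exact hD.no1 (h1 ▸ hyv)
    · exact hD v ((hD2t _ _ h1).tail hyv)
  -- decompose paths in the flipped graph
  have hdec : ∀ a b, Relation.TransGen (Dflip v w D) a b →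
      Relation.TransGen D2 a b ∨
        ((Relation.TransGen D2 a w ∨ a = w) ∧ (Relation.TransGen D2 v b ∨ v = b)) := by
    intro a b h
    induction h with
    | single h =>
      rcases h with ⟨rfl, rfl⟩ | h
      · exact Or.inr ⟨Or.inr rfl, Or.inr rfl⟩
      · exact Or.inl (Relation.TransGen.single h)
    | tail hac hcb ih =>
      rcases hcb with ⟨rfl, rfl⟩ | hcb
      · -- last step is the new edge w → v
        refine Or.inr ⟨?_, Or.inr rfl⟩
        rcases ih with h1 | h1
        · exact Or.inl h1
        · exact h1.1
      · rcases ih with h1 | h1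
        · exact Or.inl (h1.tail hcb)
        · refine Or.inr ⟨h1.1, ?_⟩
          rcases h1.2 with h2 | h2
          · exact Or.inl (h2.tail hcb)
          · exact Or.inl (h2 ▸ Relation.TransGen.single hcb)
  intro i hi
  rcases hdec i i hi with h1 | ⟨h1, h2⟩
  · exact hD i (hD2t _ _ h1)
  · rcases h1 with h1 | h1
    · rcases h2 with h2 | h2
      · exact hkey (h2.trans h1)
      · subst h2; exact hkey h1
    · subst h1
      rcases h2 with h2 | h2
      · exact hkey h2
      · exact hne h2

lemma flip_skeleton (hD : IsAcyclic D) (hvw : D v w) :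
    SameSkeleton D (Dflip v w D) := by
  intro a b
  unfold Dflip
  constructor
  · rintro (h | h)
    · by_cases hab : a = v ∧ b = w
      · exact Or.inr (Or.inl ⟨hab.2, hab.1⟩)
      · exact Or.inl (Or.inr ⟨h, hab⟩)
    · by_cases hab : b = v ∧ a = w
      · exact Or.inl (Or.inl ⟨hab.2, hab.1⟩)
      · exact Or.inr (Or.inr ⟨h, hab⟩)
  · rintro ((⟨rfl, rfl⟩ | h) | (⟨rfl, rfl⟩ | h))
    · exact Or.inr hvw
    · exact Or.inl h.1
    · exact Or.inl hvw
    · exact Or.inr h.1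

lemma flip_apply_ne {a b : Fin p} (h1 : ¬(a = v ∧ b = w)) (h2 : ¬(a = w ∧ b = v)) :
    Dflip v w D a b ↔ D a b := by
  unfold Dflip; tauto

lemma flip_vstructs (hD : IsAcyclic D) (hvw : D v w) (hcov : Covered D v w) :
    SameVStructs D (Dflip v w D) := by
  have hne : v ≠ w := fun h => hD.no1 (h ▸ hvw)
  have hsk := flip_skeleton (D := D) hD hvw
  intro i k j
  constructor
  · rintro ⟨hik, hjk, hij, hnadj1, hnadj2⟩
    have hnadj' : ¬ Dflip v w D i j ∧ ¬ Dflip v w D j i := by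
      have h2 := (hsk i j).not
      constructor
      · intro h; exact (h2.mp (fun hh => hh.elim hnadj1 hnadj2)) (Or.inl h)
      · intro h; exact (h2.mp (fun hh => hh.elim hnadj1 hnadj2)) (Or.inr h)
    -- neither collider edge can be the edge (v, w)
    have key : ∀ a b : Fin p, D a k → D b k → a ≠ b → ¬ D a b → ¬ D b a → ¬(a = v ∧ k = w) := by
      rintro a b hak hbk hab hnab hnba ⟨hav, hkw⟩
      have hbw : D b w := by rw [← hkw]; exact hbk
      have hbv : D b v := ((hcov b).mp hbw).resolve_right
        (fun h => hab (hav.trans h.symm))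
      apply hnba
      rw [hav]; exact hbv
    refine ⟨Or.inr ⟨hik, key i j hik hjk hij hnadj1 hnadj2⟩,
      Or.inr ⟨hjk, key j i hjk hik (Ne.symm hij) hnadj2 hnadj1⟩, hij, hnadj'.1, hnadj'.2⟩
  · rintro ⟨hik, hjk, hij, hnadj1, hnadj2⟩
    have hnadj : ¬ D i j ∧ ¬ D j i := by
      have h2 := (hsk i j).not
      constructor
      · intro h; exact (h2.mpr (fun hh => hh.elim hnadj1 hnadj2)) (Or.inl h)
      · intro h; exact (h2.mpr (fun hh => hh.elim hnadj1 hnadj2)) (Or.inr h)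
    -- neither collider edge of the flipped graph can be the new edge (w, v)
    have key : ∀ a b : Fin p, Dflip v w D a k → Dflip v w D b k → a ≠ b →
        ¬ Dflip v w D a b → ¬ Dflip v w D b a → D a k := by
      rintro a b hak hbk hab hnab hnba
      rcases hak with ⟨haw, hkv⟩ | hak
      · exfalso
        rcases hbk with ⟨hbw, _⟩ | hbk
        · exact hab (haw.trans hbw.symm)
        · have hbv : D b v := by rw [← hkv]; exact hbk.1
          have hbw : D b w := (hcov b).mpr (Or.inl hbv)
          have hadj : Dflip v w D b w ∨ Dflip v w D w b := by
            have h2 := (hsk b w).mp (Or.inl hbw)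
            tauto
          rw [haw] at hnab hnba
          tauto
      · exact hak.1
    exact ⟨key i j hik hjk hij hnadj1 hnadj2, key j i hjk hik (Ne.symm hij) hnadj2 hnadj1,
      hij, hnadj.1, hnadj.2⟩

lemma flip_parents (hD : IsAcyclic D) (hvw : D v w) {i : Fin p}
    (hiv : i ≠ v) (hiw : i ≠ w) : ∀ j, Dflip v w D j i ↔ D j i := by
  intro j
  apply flip_apply_ne
  · rintro ⟨rfl, rfl⟩; exact hiw rfl
  · rintro ⟨rfl, rfl⟩; exact hiv rfl

end Flip

section Count

variable {p : ℕ}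

open Classical in
noncomputable def diffCount (D D' : Fin p → Fin p → Prop) : ℕ :=
  (Finset.univ.filter (fun ab : Fin p × Fin p => ¬(D ab.1 ab.2 ↔ D' ab.1 ab.2))).card

lemma diffCount_eq_zero {D D' : Fin p → Fin p → Prop} (h : diffCount D D' = 0) :
    ∀ a b, D a b ↔ D' a b := by
  classical
  intro a b
  unfold diffCount at h
  rw [Finset.card_eq_zero, Finset.filter_eq_empty_iff] at h
  have := h (Finset.mem_univ (a, b))
  simpa using not_not.mp (by simpa using this)

lemma diffCount_flip_lt {D D' : Fin p → Fin p → Prop} {v w : Fin p}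
    (hD : IsAcyclic D) (hD' : IsAcyclic D') (hvw : D v w) (hwv' : D' w v) :
    diffCount (Dflip v w D) D' < diffCount D D' := by
  classical
  have hne : v ≠ w := fun h => hD.no1 (h ▸ hvw)
  apply Finset.card_lt_card
  rw [Finset.ssubset_iff_of_subset]
  · refine ⟨(v, w), ?_, ?_⟩
    · simp only [Finset.mem_filter, Finset.mem_univ, true_and]
      intro hiff
      exact hD'.no2 (hiff.mp hvw) hwv'
    · simp only [Finset.mem_filter, Finset.mem_univ, true_and, not_not]
      constructor
      · intro hf
        exfalso
        rcases hf with ⟨h1, h2⟩ | ⟨_, h2⟩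
        · exact hne h1
        · exact h2 ⟨rfl, rfl⟩
      · intro h
        exact (hD'.no2 h hwv').elim
  · intro ab hab
    simp only [Finset.mem_filter, Finset.mem_univ, true_and] at hab ⊢
    intro hiff
    apply hab
    obtain ⟨a, b⟩ := ab
    by_cases h1 : a = v ∧ b = w
    · exfalso
      apply hab
      constructor
      · intro hf
        exfalso
        rcases hf with ⟨h2, h3⟩ | ⟨_, h2⟩
        · exact hne (h1.1.symm.trans h2)
        · exact h2 h1
      · intro h
        exfalso
        rw [h1.1, h1.2] at h
        exact hD'.no2 h hwv'
    · by_cases h2 : a = w ∧ b = v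
      · exfalso
        apply hab
        rw [h2.1, h2.2]
        constructor
        · intro _; exact hwv'
        · intro _; exact Or.inl ⟨rfl, rfl⟩
      · exact Iff.trans (flip_apply_ne h1 h2) hiff
end Count

section MatrixAlgebra

variable {p : ℕ} (v w : Fin p) (b γ : ℝ)

private lemma sum_two (a c : ℝ) (f : Fin p → ℝ) :
    (∑ k, ((if k = v then a else 0) + (if k = w then c else 0)) * f k) = a * f v + c * f w := by
  simp [add_mul, ite_mul, Finset.sum_add_distrib, Finset.sum_ite_eq']

private lemma sum_two' (a c : ℝ) (f : Fin p → ℝ) :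
    (∑ k, f k * ((if k = v then a else 0) + (if k = w then c else 0))) = f v * a + f w * c := by
  simp [mul_add, mul_ite, Finset.sum_add_distrib, Finset.sum_ite_eq']

private lemma sum_one (i : Fin p) (f : Fin p → ℝ) :
    (∑ k, (if k = i then 1 else 0) * f k) = f i := by
  simp [ite_mul, Finset.sum_ite_eq']

private lemma sum_one' (i : Fin p) (f : Fin p → ℝ) :
    (∑ k, f k * (if k = i then 1 else 0)) = f i := by
  simp [mul_ite, Finset.sum_ite_eq']

/-- The noise-mixing matrix for a covered edge reversal. -/
noncomputable def Smat : Matrix (Fin p) (Fin p) ℝ :=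
  Matrix.of fun i k =>
    if i = v then ((if k = v then 1 - γ * b else 0) + (if k = w then -γ else 0))
    else if i = w then ((if k = v then b else 0) + (if k = w then 1 else 0))
    else (if k = i then 1 else 0)

/-- Its inverse. -/
noncomputable def Smat' : Matrix (Fin p) (Fin p) ℝ :=
  Matrix.of fun i k =>
    if i = v then ((if k = v then 1 else 0) + (if k = w then γ else 0))
    else if i = w then ((if k = v then -b else 0) + (if k = w then 1 - γ * b else 0))
    else (if k = i then 1 else 0)

lemma Smat_row_v (k : Fin p) :
    Smat v w b γ v k = (if k = v then 1 - γ * b else 0) + (if k = w then -γ else 0) := by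
  simp [Smat]

lemma Smat_row_w (hvw : v ≠ w) (k : Fin p) :
    Smat v w b γ w k = (if k = v then b else 0) + (if k = w then 1 else 0) := by
  simp [Smat, Ne.symm hvw]

lemma Smat_row_other {i : Fin p} (hi : i ≠ v) (hi2 : i ≠ w) (k : Fin p) :
    Smat v w b γ i k = if k = i then 1 else 0 := by
  simp [Smat, hi, hi2]

lemma Smat'_row_v (k : Fin p) :
    Smat' v w b γ v k = (if k = v then 1 else 0) + (if k = w then γ else 0) := by
  simp [Smat']

lemma Smat'_row_w (hvw : v ≠ w) (k : Fin p) :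
    Smat' v w b γ w k = (if k = v then -b else 0) + (if k = w then 1 - γ * b else 0) := by
  simp [Smat', Ne.symm hvw]

lemma Smat'_row_other {i : Fin p} (hi : i ≠ v) (hi2 : i ≠ w) (k : Fin p) :
    Smat' v w b γ i k = if k = i then 1 else 0 := by
  simp [Smat', hi, hi2]

lemma Smat_mul_apply (hvw : v ≠ w) (M : Matrix (Fin p) (Fin p) ℝ) (i j : Fin p) :
    (Smat v w b γ * M) i j =
      if i = v then (1 - γ * b) * M v j + (-γ) * M w j
      else if i = w then b * M v j + M w j
      else M i j := by
  rw [Matrix.mul_apply]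
  by_cases hi : i = v
  · rw [if_pos hi]
    simp only [hi, Smat_row_v]
    rw [sum_two]
  · by_cases hi2 : i = w
    · rw [if_neg hi, if_pos hi2]
      simp only [hi2, Smat_row_w v w b γ hvw]
      rw [sum_two, one_mul]
    · rw [if_neg hi, if_neg hi2]
      simp only [Smat_row_other v w b γ hi hi2]
      rw [sum_one]

lemma Smat'_mul_apply (hvw : v ≠ w) (M : Matrix (Fin p) (Fin p) ℝ) (i j : Fin p) :
    (Smat' v w b γ * M) i j =
      if i = v then M v j + γ * M w j
      else if i = w then (-b) * M v j + (1 - γ * b) * M w j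
      else M i j := by
  rw [Matrix.mul_apply]
  by_cases hi : i = v
  · rw [if_pos hi]
    simp only [hi, Smat'_row_v]
    rw [sum_two, one_mul]
  · by_cases hi2 : i = w
    · rw [if_neg hi, if_pos hi2]
      simp only [hi2, Smat'_row_w v w b γ hvw]
      rw [sum_two]
    · rw [if_neg hi, if_neg hi2]
      simp only [Smat'_row_other v w b γ hi hi2]
      rw [sum_one]

lemma mul_SmatT_apply (hvw : v ≠ w) (M : Matrix (Fin p) (Fin p) ℝ) (i j : Fin p) :
    (M * (Smat v w b γ)ᵀ) i j =
      if j = v then M i v * (1 - γ * b) + M i w * (-γ)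
      else if j = w then M i v * b + M i w
      else M i j := by
  rw [Matrix.mul_apply]
  simp only [Matrix.transpose_apply]
  by_cases hj : j = v
  · rw [if_pos hj]
    simp only [hj, Smat_row_v]
    rw [sum_two']
  · by_cases hj2 : j = w
    · rw [if_neg hj, if_pos hj2]
      simp only [hj2, Smat_row_w v w b γ hvw]
      rw [sum_two', mul_one]
    · rw [if_neg hj, if_neg hj2]
      simp only [Smat_row_other v w b γ hj hj2]
      rw [sum_one']

lemma Smat_mul_Smat' (hvw : v ≠ w) : Smat v w b γ * Smat' v w b γ = 1 := by
  ext i j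
  rw [Smat_mul_apply v w b γ hvw]
  by_cases hi : i = v
  · rw [if_pos hi, hi]
    simp only [Smat'_row_v, Smat'_row_w v w b γ hvw, Matrix.one_apply]
    by_cases hj : j = v <;> by_cases hj2 : j = w
    · exact absurd (hj.symm.trans hj2) hvw
    · simp [hj, hj2, hvw, Ne.symm hvw, eq_comm]
      try ring
    · simp [hj, hj2, hvw, Ne.symm hvw, eq_comm]
      try ring
    · simp [hj, hj2, hvw, Ne.symm hvw, eq_comm]
      exact fun h => absurd h.symm hj
  · by_cases hi2 : i = w
    · rw [if_neg hi, if_pos hi2, hi2]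
      simp only [Smat'_row_v, Smat'_row_w v w b γ hvw, Matrix.one_apply]
      by_cases hj : j = v <;> by_cases hj2 : j = w
      · exact absurd (hj.symm.trans hj2) hvw
      · simp [hj, hj2, hvw, Ne.symm hvw, eq_comm]
        try ring
      · simp [hj, hj2, hvw, Ne.symm hvw, eq_comm]
        try ring
      · simp [hj, hj2, hvw, Ne.symm hvw, eq_comm]
        exact fun h => absurd h.symm hj2
    · rw [if_neg hi, if_neg hi2]
      simp [Smat'_row_other v w b γ hi hi2, Matrix.one_apply, eq_comm]

lemma Smat'_mul_Smat (hvw : v ≠ w) : Smat' v w b γ * Smat v w b γ = 1 :=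
  mul_eq_one_comm.mp (Smat_mul_Smat' v w b γ hvw)

end MatrixAlgebra

section FlipModel

variable {p : ℕ} {E : Type*} [Fintype E]

lemma flip_model (e₀ : E) {D : Fin p → Fin p → Prop} {v w : Fin p}
    (hD : IsAcyclic D) (hvw : D v w) (hcov : Covered D v w)
    (B : Matrix (Fin p) (Fin p) ℝ) (Ω : E → Matrix (Fin p) (Fin p) ℝ)
    (hcomp : Compatible B D) (hdiag : ∀ e, DiagPos (Ω e))
    (hconstv : ∀ e, Ω e v v = Ω e₀ v v) (hconstw : ∀ e, Ω e w w = Ω e₀ w w) :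
    ∃ Bt : Matrix (Fin p) (Fin p) ℝ, ∃ Ωt : E → Matrix (Fin p) (Fin p) ℝ,
      Compatible Bt (Dflip v w D) ∧ (∀ e, DiagPos (Ωt e)) ∧
      (∀ e j, j ≠ v → j ≠ w → Ωt e j j = Ω e j j) ∧
      (∀ e f, Ωt e v v = Ωt f v v) ∧ (∀ e f, Ωt e w w = Ωt f w w) ∧
      (∀ e, CovOf B (Ω e) = CovOf Bt (Ωt e)) := by
  have hne : v ≠ w := fun h => hD.no1 (h ▸ hvw)
  set dv : ℝ := Ω e₀ v v with hdv_def
  set dw : ℝ := Ω e₀ w w with hdw_def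
  have hdv : 0 < dv := (hdiag e₀).2 v
  have hdw : 0 < dw := (hdiag e₀).2 w
  set bb : ℝ := B w v with hbb_def
  set den : ℝ := bb ^ 2 * dv + dw with hden_def
  have hden : 0 < den := by
    have h1 : 0 ≤ bb ^ 2 * dv := mul_nonneg (sq_nonneg bb) hdv.le
    linarith
  set γ : ℝ := bb * dv / den with hγ_def
  have hγden : γ * den = bb * dv := div_mul_cancel₀ _ hden.ne'
  set S := Smat v w bb γ with hS_def
  set S' := Smat' v w bb γ with hS'_def
  have hSS' : S * S' = 1 := Smat_mul_Smat' v w bb γ hne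
  have hS'S : S' * S = 1 := Smat'_mul_Smat v w bb γ hne
  have hTT' : Sᵀ * S'ᵀ = 1 := by
    rw [← Matrix.transpose_mul, hS'S, Matrix.transpose_one]
  -- basic zero entries of B
  have hBvv : B v v = 0 := by
    by_contra h
    exact hD.no1 (hcomp v v h)
  have hBvw : B v w = 0 := by
    by_contra h
    exact hD.no2 hvw (hcomp v w h)
  have hBww : B w w = 0 := by
    by_contra h
    exact hD.no1 (hcomp w w h)
  -- the new matrices
  set Bt : Matrix (Fin p) (Fin p) ℝ := 1 - S * (1 - B) with hBt_def
  set Ωt : E → Matrix (Fin p) (Fin p) ℝ := fun e =>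
    Matrix.diagonal (fun j => if j = v then dv - γ * bb * dv
      else if j = w then dw + bb ^ 2 * dv else Ω e j j) with hΩt_def
  have h1Bt : (1 : Matrix (Fin p) (Fin p) ℝ) - Bt = S * (1 - B) := sub_sub_cancel _ _
  -- entries of Bt
  have hBt_apply : ∀ i j, Bt i j =
      if i = v then (1 : Matrix (Fin p) (Fin p) ℝ) i j
          - ((1 - γ * bb) * ((1 - B) v j) + (-γ) * ((1 - B) w j))
      else if i = w then (1 : Matrix (Fin p) (Fin p) ℝ) i j
          - (bb * ((1 - B) v j) + (1 - B) w j)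
      else B i j := by
    intro i j
    rw [hBt_def, Matrix.sub_apply, Smat_mul_apply v w bb γ hne]
    by_cases hi : i = v
    · rw [if_pos hi, if_pos hi]
    · by_cases hi2 : i = w
      · rw [if_neg hi, if_neg hi, if_pos hi2, if_pos hi2]
      · rw [if_neg hi, if_neg hi, if_neg hi2, if_neg hi2, Matrix.sub_apply]
        ring
  rw [hden_def] at hγden
  -- explicit entries
  have hone : ∀ a b : Fin p, (1 : Matrix (Fin p) (Fin p) ℝ) a b = if a = b then 1 else 0 :=
    fun a b => Matrix.one_apply
  have hsub : ∀ a b : Fin p, ((1 : Matrix (Fin p) (Fin p) ℝ) - B) a b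
      = (if a = b then (1:ℝ) else 0) - B a b := by
    intro a b; rw [Matrix.sub_apply, hone]
  have hBt_vv : Bt v v = 0 := by
    rw [hBt_apply, if_pos rfl, hsub, hsub, hone]
    simp [hne, Ne.symm hne, hBvv, ← hbb_def]
    try ring
  have hBt_vw : Bt v w = γ := by
    rw [hBt_apply, if_pos rfl, hsub, hsub, hone]
    simp [hne, Ne.symm hne, hBvw, hBww]
  have hBt_vj : ∀ j, j ≠ v → j ≠ w → Bt v j = (1 - γ * bb) * B v j - γ * B w j := by
    intro j hj hj2
    rw [hBt_apply, if_pos rfl, hsub, hsub, hone]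
    simp [hne, Ne.symm hj, Ne.symm hj2]
    try ring
  have hBt_wv : Bt w v = 0 := by
    rw [hBt_apply, if_neg (Ne.symm hne), if_pos rfl, hsub, hsub, hone]
    simp [hne, Ne.symm hne, hBvv, ← hbb_def]
  have hBt_ww : Bt w w = 0 := by
    rw [hBt_apply, if_neg (Ne.symm hne), if_pos rfl, hsub, hsub, hone]
    simp [hne, Ne.symm hne, hBvw, hBww]
  have hBt_wj : ∀ j, j ≠ v → j ≠ w → Bt w j = bb * B v j + B w j := by
    intro j hj hj2
    rw [hBt_apply, if_neg (Ne.symm hne), if_pos rfl, hsub, hsub, hone]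
    simp [Ne.symm hj, Ne.symm hj2]
    try ring
  have hBt_other : ∀ i j, i ≠ v → i ≠ w → Bt i j = B i j := by
    intro i j hi hi2
    rw [hBt_apply, if_neg hi, if_neg hi2]
  -- compatibility with the flipped graph
  have hcompBt : Compatible Bt (Dflip v w D) := by
    intro i j hBt0
    by_cases hi : i = v
    · by_cases hj : j = v
      · exfalso; rw [hi, hj, hBt_vv] at hBt0; exact hBt0 rfl
      · by_cases hj2 : j = w
        · exact Or.inl ⟨hj2, hi⟩
        · rw [hi, hBt_vj j hj hj2] at hBt0
          have hjv : D j v := by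
            by_cases h1 : B v j = 0
            · by_cases h2 : B w j = 0
              · exfalso; apply hBt0; rw [h1, h2]; ring
              · exact ((hcov j).mp (hcomp w j h2)).resolve_right hj
            · exact hcomp v j h1
          exact Or.inr ⟨hi ▸ hjv, fun h => hj h.1⟩
    · by_cases hi2 : i = w
      · by_cases hj : j = v
        · exfalso; rw [hi2, hj, hBt_wv] at hBt0; exact hBt0 rfl
        · by_cases hj2 : j = w
          · exfalso; rw [hi2, hj2, hBt_ww] at hBt0; exact hBt0 rfl
          · rw [hi2, hBt_wj j hj hj2] at hBt0
            have hjw : D j w := by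
              by_cases h1 : B v j = 0
              · by_cases h2 : B w j = 0
                · exfalso; apply hBt0; rw [h1, h2]; ring
                · exact hcomp w j h2
              · exact (hcov j).mpr (Or.inl (hcomp v j h1))
            exact Or.inr ⟨hi2 ▸ hjw, fun h => hj h.1⟩
      · rw [hBt_other i j hi hi2] at hBt0
        exact Or.inr ⟨hcomp i j hBt0, fun h => hi2 h.2⟩
  -- positivity facts
  have hvpos : 0 < dv - γ * bb * dv := by
    have hval : dv - γ * bb * dv = dv * dw / den := by
      rw [hγ_def, hden_def]
      field_simp
      ring
    rw [hval]
    exact div_pos (mul_pos hdv hdw) hden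
  have hwpos : 0 < dw + bb ^ 2 * dv := by
    nlinarith [mul_nonneg (sq_nonneg bb) hdv.le]
  have hΩt_diag : ∀ e j, Ωt e j j = if j = v then dv - γ * bb * dv
      else if j = w then dw + bb ^ 2 * dv else Ω e j j := by
    intro e j
    rw [hΩt_def]
    exact Matrix.diagonal_apply_eq _ j
  have hdiagt : ∀ e, DiagPos (Ωt e) := by
    intro e
    refine ⟨Matrix.isDiag_diagonal _, fun i => ?_⟩
    rw [hΩt_diag]
    by_cases hi : i = v
    · rw [if_pos hi]; exact hvpos
    · by_cases hi2 : i = w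
      · rw [if_neg hi, if_pos hi2]; exact hwpos
      · rw [if_neg hi, if_neg hi2]; exact (hdiag e).2 i
  -- the transformed noise identity
  have hΩe : ∀ (e : E) (a b : Fin p), a ≠ b → Ω e a b = 0 := fun e a b h => (hdiag e).1 h
  have hkeyΩ : ∀ e, S * Ω e * Sᵀ = Ωt e := by
    intro e
    ext i j
    have hM : ∀ a c, (S * Ω e) a c = if a = v then (1 - γ * bb) * Ω e v c + (-γ) * Ω e w c
        else if a = w then bb * Ω e v c + Ω e w c
        else Ω e a c := fun a c => Smat_mul_apply v w bb γ hne (Ω e) a c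
    rw [mul_SmatT_apply v w bb γ hne]
    have hRHS : Ωt e i j = if i = j then (if i = v then dv - γ * bb * dv
        else if i = w then dw + bb ^ 2 * dv else Ω e i i) else 0 := by
      simp only [hΩt_def]; rw [Matrix.diagonal_apply]
    rw [hRHS]
    have hz1 : Ω e v w = 0 := hΩe e v w hne
    have hz2 : Ω e w v = 0 := hΩe e w v (Ne.symm hne)
    by_cases hj : j = v
    · by_cases hi : i = v
      · simp only [hM]
        simp [hi, hj, hne, Ne.symm hne, hconstv e, hconstw e, hz1, hz2]
        try linear_combination γ * hγden
      · by_cases hi2 : i = w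
        · simp only [hM]
          simp [hi2, hj, hne, Ne.symm hne, hconstv e, hconstw e, hz1, hz2,
            fun h : w = v => hne h.symm]
          try linear_combination -hγden
        · simp only [hM]
          simp [hi, hi2, hj, hne, Ne.symm hne, hΩe e i v hi, hΩe e i w hi2,
            fun h : i = j => hi (h.trans hj)]
    · by_cases hj2 : j = w
      · by_cases hi : i = v
        · simp only [hM]
          simp [hi, hj2, hne, Ne.symm hne, hconstv e, hconstw e, hz1, hz2]
          try linear_combination -hγden
        · by_cases hi2 : i = w
          · simp only [hM]
            simp [hi2, hj2, hne, Ne.symm hne, hconstv e, hconstw e, hz1, hz2]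
            try ring
          · simp only [hM]
            simp [hi, hi2, hj2, hne, Ne.symm hne, hΩe e i v hi, hΩe e i w hi2]
      · by_cases hi : i = v
        · simp only [hM]
          simp [hi, hj, hj2, hne, Ne.symm hne, hΩe e v j (fun h => hj h.symm),
            hΩe e w j (fun h => hj2 h.symm)]
          try rw [if_neg (fun h : v = j => hj h.symm)]
          exact fun h => absurd h.symm hj
        · by_cases hi2 : i = w
          · simp only [hM]
            simp [hi2, hj, hj2, hne, Ne.symm hne, hΩe e v j (fun h => hj h.symm),
              hΩe e w j (fun h => hj2 h.symm)]
            try rw [if_neg (fun h : w = j => hj2 h.symm)]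
            exact fun h => absurd h.symm hj2
          · by_cases hij : i = j
            · simp only [hM]
              simp [hi, hi2, hij, hj, hj2]
            · simp only [hM]
              simp [hi, hi2, hij, hj, hj2, hΩe e i j hij]
  -- covariance equality
  have hCov : ∀ e, CovOf B (Ω e) = CovOf Bt (Ωt e) := by
    intro e
    unfold CovOf
    have hSinv : S⁻¹ = S' := Matrix.inv_eq_right_inv hSS'
    rw [h1Bt, Matrix.mul_inv_rev, hSinv, ← hkeyΩ e, Matrix.transpose_mul]
    simp only [Matrix.mul_assoc]
    congr 1
    rw [← Matrix.mul_assoc Sᵀ S'ᵀ, hTT', Matrix.one_mul,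
      ← Matrix.mul_assoc S (Ω e), ← Matrix.mul_assoc S' (S * Ω e),
      ← Matrix.mul_assoc S' S, hS'S, Matrix.one_mul]
  refine ⟨Bt, Ωt, hcompBt, hdiagt, ?_, ?_, ?_, hCov⟩
  · intro e j hj hj2
    rw [hΩt_diag, if_neg hj, if_neg hj2]
  · intro e f
    rw [hΩt_diag, hΩt_diag, if_pos rfl, if_pos rfl]
  · intro e f
    rw [hΩt_diag, hΩt_diag, if_neg (Ne.symm hne), if_neg (Ne.symm hne), if_pos rfl, if_pos rfl]

end FlipModel

section Main

variable {p : ℕ}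

lemma edge_agree {I : Set (Fin p)} {D D' : Fin p → Fin p → Prop}
    (hD : IsAcyclic D) (hD' : IsAcyclic D') (hequiv : IEquiv I D D')
    {v w : Fin p} (hvw : D v w) (hwv' : D' w v) : v ∉ I ∧ w ∉ I := by
  obtain ⟨hsk, hvs, hpa⟩ := hequiv
  constructor
  · intro hv
    exact hD.no2 hvw ((hpa v hv w).mpr hwv')
  · intro hw
    exact hD'.no2 ((hpa w hw v).mp hvw) hwv'

lemma main_aux {E : Type*} [Fintype E] (e₀ : E) :
    ∀ (n : ℕ) (I : Set (Fin p)) (D D' : Fin p → Fin p → Prop),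
      diffCount D D' = n → IsAcyclic D → IsAcyclic D' → IEquiv I D D' →
      ∀ (B : Matrix (Fin p) (Fin p) ℝ) (Ω : E → Matrix (Fin p) (Fin p) ℝ),
      IsDagMatrix B → Compatible B D → (∀ e, DiagPos (Ω e)) →
      ({j : Fin p | ∃ e f : E, Ω e j j ≠ Ω f j j} = I) →
      ∃ Bt : Matrix (Fin p) (Fin p) ℝ, ∃ Ωt : E → Matrix (Fin p) (Fin p) ℝ,
        IsDagMatrix Bt ∧ Compatible Bt D' ∧ (∀ e, DiagPos (Ωt e)) ∧
        ({j : Fin p | ∃ e f : E, Ωt e j j ≠ Ωt f j j} = I) ∧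
        ∀ e, CovOf B (Ω e) = CovOf Bt (Ωt e) := by
  intro n
  induction n using Nat.strong_induction_on with
  | _ n ih =>
    intro I D D' hcount hD hD' hequiv B Ω hdag hcomp hdiag hI
    by_cases heq : ∀ a b, D a b ↔ D' a b
    · exact ⟨B, Ω, hdag, fun i j h => (heq j i).mp (hcomp i j h), hdiag, hI, fun e => rfl⟩
    · push_neg at heq
      have hex : ∃ a b, D a b ∧ ¬ D' a b := by
        obtain ⟨a, b, hab⟩ := heq
        rcases hab with ⟨h1, h2⟩ | ⟨h1, h2⟩
        · exact ⟨a, b, h1, h2⟩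
        · have h3 : D b a := ((hequiv.1 a b).mpr (Or.inl h2)).resolve_left h1
          have h4 : ¬ D' b a := fun h => hD'.no2 h2 h
          exact ⟨b, a, h3, h4⟩
      obtain ⟨v, w, hvw, hwv', hcov⟩ := chickering hD hD' hequiv.1 hequiv.2.1 hex
      have hIvw := edge_agree hD hD' hequiv hvw hwv'
      have hconstv : ∀ e, Ω e v v = Ω e₀ v v := by
        intro e
        by_contra h
        have hmem : v ∈ {j : Fin p | ∃ e f : E, Ω e j j ≠ Ω f j j} := ⟨e, e₀, h⟩
        rw [hI] at hmem
        exact hIvw.1 hmem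
      have hconstw : ∀ e, Ω e w w = Ω e₀ w w := by
        intro e
        by_contra h
        have hmem : w ∈ {j : Fin p | ∃ e f : E, Ω e j j ≠ Ω f j j} := ⟨e, e₀, h⟩
        rw [hI] at hmem
        exact hIvw.2 hmem
      obtain ⟨Bt, Ωt, hcompBt, hdiagt, hsame, hcv, hcw, hcov2⟩ :=
        flip_model e₀ hD hvw hcov B Ω hcomp hdiag hconstv hconstw
      have hflip_ac : IsAcyclic (Dflip v w D) := flip_acyclic hD hvw hcov
      have hsk1 : SameSkeleton D (Dflip v w D) := flip_skeleton hD hvw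
      have hvs1 : SameVStructs D (Dflip v w D) := flip_vstructs hD hvw hcov
      have hequiv1 : IEquiv I (Dflip v w D) D' := by
        refine ⟨fun a b => ((hsk1 a b).symm.trans (hequiv.1 a b)),
          fun i k j => ((hvs1 i k j).symm.trans (hequiv.2.1 i k j)), ?_⟩
        intro i hi j
        have hiv : i ≠ v := fun h => hIvw.1 (h ▸ hi)
        have hiw : i ≠ w := fun h => hIvw.2 (h ▸ hi)
        rw [flip_parents hD hvw hiv hiw j]
        exact hequiv.2.2 i hi j
      have hIt : {j : Fin p | ∃ e f : E, Ωt e j j ≠ Ωt f j j} = I := by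
        rw [← hI]
        ext j
        simp only [Set.mem_setOf_eq]
        by_cases hjv : j = v
        · constructor
          · rintro ⟨e, f, hef⟩
            exact absurd (by rw [hjv]; exact hcv e f) hef
          · rintro ⟨e, f, hef⟩
            exfalso; apply hef; rw [hjv, hconstv e, hconstv f]
        · by_cases hjw : j = w
          · constructor
            · rintro ⟨e, f, hef⟩
              exact absurd (by rw [hjw]; exact hcw e f) hef
            · rintro ⟨e, f, hef⟩
              exfalso; apply hef; rw [hjw, hconstw e, hconstw f]
          · constructor
            · rintro ⟨e, f, hef⟩
              refine ⟨e, f, ?_⟩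
              rw [← hsame e j hjv hjw, ← hsame f j hjv hjw]
              exact hef
            · rintro ⟨e, f, hef⟩
              refine ⟨e, f, ?_⟩
              rw [hsame e j hjv hjw, hsame f j hjv hjw]
              exact hef
      have hlt : diffCount (Dflip v w D) D' < n :=
        hcount ▸ diffCount_flip_lt hD hD' hvw hwv'
      obtain ⟨B2, Ω2, hdag2, hcomp2, hdiag2, hI2, hcov3⟩ :=
        ih _ hlt I (Dflip v w D) D' rfl hflip_ac hD' hequiv1 Bt Ωt
          (isDagMatrix_of_compatible hflip_ac hcompBt) hcompBt hdiagt hIt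
      exact ⟨B2, Ω2, hdag2, hcomp2, hdiag2, hI2, fun e => (hcov2 e).trans (hcov3 e)⟩

end Main

/-- `𝓘`-equivalent graphs entail the same distributions: if `𝒟 ∼_𝓘 𝒟'`, then for every
model `(B, {Ω^e})` with `B ∼ 𝒟` and intervention targets exactly `𝓘`, there is a model
`(B~, {Ω~^e})` with `B~ ∼ 𝒟'`, intervention targets exactly `𝓘`, and the same
covariances in every environment. -/

theorem iequiv_graphs_entail_same_distributions
    {p : ℕ} {E : Type*} [Fintype E]
    (I : Set (Fin p)) (D D' : Fin p → Fin p → Prop)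
    (hD : IsAcyclic D) (hD' : IsAcyclic D')
    (hequiv : IEquiv I D D') :
    ∀ (B : Matrix (Fin p) (Fin p) ℝ) (Ω : E → Matrix (Fin p) (Fin p) ℝ),
      IsDagMatrix B → Compatible B D → (∀ e, DiagPos (Ω e)) →
      {j : Fin p | ∃ e f : E, Ω e j j ≠ Ω f j j} = I →
      ∃ Bt : Matrix (Fin p) (Fin p) ℝ, ∃ Ωt : E → Matrix (Fin p) (Fin p) ℝ,
        IsDagMatrix Bt ∧ Compatible Bt D' ∧ (∀ e, DiagPos (Ωt e)) ∧
        {j : Fin p | ∃ e f : E, Ωt e j j ≠ Ωt f j j} = I ∧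
        ∀ e, CovOf B (Ω e) = CovOf Bt (Ωt e) := by
  intro B Ω hdag hcomp hdiag hI
  rcases isEmpty_or_nonempty E with hE | hE
  · refine ⟨0, Ω, ⟨1, fun i j _ => rfl⟩, ?_, hdiag, hI, fun e => isEmptyElim e⟩
    intro i j h
    exact absurd rfl h
  · obtain ⟨e₀⟩ := hE
    exact main_aux e₀ (diffCount D D') I D D' rfl hD hD' hequiv B Ω hdag hcomp hdiag hI
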